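/- For a positive integer n ≥ 2, the ring ℤ/nℤ is weak von Neumann regular if and only if n is a prime power or n is squarefree (i.e., v_p(n) ∈ {0,1} for every prime p). -/

import Mathlib

/-- A commutative ring is weak von Neumann regular (WVNR) if for every pair of
finitely generated ideals `I ⊆ J ⊊ R`, if `J` is generated by an idempotent,
then so is `I`. -/
def IsWVNR (R : Type _) [CommRing R] : Prop :=
  ∀ I J : Ideal R, I.FG → J.FG → I ≤ J → J ≠ ⊤ →
    (∃ e : R, IsIdempotentElem e ∧ J = Ideal.span {e}) →
    ∃ f : R, IsIdempotentElem f ∧ I = Ideal.span {f}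

/-- von Neumann regular: every `x` satisfies `x = x² y` for some `y`. -/
def IsVNRegular (R : Type _) [CommRing R] : Prop :=
  ∀ x : R, ∃ y : R, x = x ^ 2 * y

/-- Idempotents in `ZMod (p^k)` are 0 or 1. -/
lemma idem_zmod_ppow {p k : ℕ} (hp : p.Prime) (e : ZMod (p ^ k))
    (he : IsIdempotentElem e) : e = 0 ∨ e = 1 := by
  haveI : NeZero (p ^ k) := ⟨pow_ne_zero _ hp.pos.ne'⟩
  set E : ℤ := (e.val : ℤ) with hE
  have hcast : ((E : ℤ) : ZMod (p ^ k)) = e := by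
    simp [hE, ZMod.natCast_zmod_val]
  have hdvd : ((p ^ k : ℕ) : ℤ) ∣ E * (E - 1) := by
    rw [← ZMod.intCast_zmod_eq_zero_iff_dvd]
    push_cast
    rw [hcast]
    have := he
    unfold IsIdempotentElem at this
    ring_nf
    rw [← pow_two] at *
    rw [this]
    ring
  have hpZ : Prime ((p : ℤ)) := Nat.prime_iff_prime_int.mp hp
  push_cast at hdvd
  by_cases hd : (p : ℤ) ∣ E
  · -- then p does not divide E - 1, so p^k ∣ E, e = 0
    have hnd : ¬ (p : ℤ) ∣ (E - 1) := by
      intro h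
      have : (p : ℤ) ∣ 1 := by
        have := dvd_sub hd h
        simpa using this
      exact hpZ.not_unit (isUnit_of_dvd_one this)
    have hco : IsCoprime ((p : ℤ) ^ k) (E - 1) :=
      IsCoprime.pow_left (hpZ.coprime_iff_not_dvd.mpr hnd)
    have : ((p : ℤ) ^ k) ∣ E := hco.dvd_of_dvd_mul_right hdvd
    left
    rw [← hcast, ZMod.intCast_zmod_eq_zero_iff_dvd]
    push_cast
    exact this
  · have hco : IsCoprime ((p : ℤ) ^ k) E :=
      IsCoprime.pow_left (hpZ.coprime_iff_not_dvd.mpr hd)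
    have : ((p : ℤ) ^ k) ∣ (E - 1) := hco.dvd_of_dvd_mul_left hdvd
    right
    have : ((E - 1 : ℤ) : ZMod (p ^ k)) = 0 := by
      rw [ZMod.intCast_zmod_eq_zero_iff_dvd]
      push_cast
      exact this
    push_cast at this
    rw [hcast] at this
    linear_combination this
  
/-- If `d * m = n` with `d` and `m` coprime, the ideal of `ZMod n` generated by `d`
is generated by an idempotent. -/
lemma span_div_idem {n d m : ℕ} (h : d * m = n) (hco : Nat.Coprime d m) :
    ∃ e : ZMod n, IsIdempotentElem e ∧
      Ideal.span {(d : ZMod n)} = Ideal.span {e} := by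
  obtain ⟨u, v, huv⟩ := Nat.isCoprime_iff_coprime.mpr hco
  refine ⟨((u * d : ℤ) : ZMod n), ?_, ?_⟩
  · -- idempotent
    unfold IsIdempotentElem
    have key : ((u * d : ℤ) : ZMod n) * ((u * d : ℤ) : ZMod n) - ((u * d : ℤ) : ZMod n)
        = ((-(u * v) * (n : ℤ) : ℤ) : ZMod n) := by
      push_cast
      have hud : (u : ZMod n) * d - 1 = -(v * m) := by
        have : ((u * d + v * m - 1 : ℤ) : ZMod n) = 0 := by
          rw [huv]; simp
        push_cast at this
        linear_combination this
      have hn : ((d : ZMod n) * m) = (n : ZMod n) := by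
        rw [← h]; push_cast; ring
      calc (u : ZMod n) * d * (u * d) - u * d
          = (u * d) * ((u : ZMod n) * d - 1) := by ring
        _ = (u * d) * (-((v : ZMod n) * m)) := by rw [hud]
        _ = -(u * v) * ((d : ZMod n) * m) := by ring
        _ = -(u * v) * (n : ZMod n) := by rw [hn]
    have h0 : ((-(u * v) * (n : ℤ) : ℤ) : ZMod n) = 0 := by
      rw [ZMod.intCast_zmod_eq_zero_iff_dvd]
      exact dvd_mul_left _ _
    rw [h0] at key
    linear_combination key
  · -- same span
    apply le_antisymm <;> rw [Ideal.span_singleton_le_span_singleton]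
    · -- d ∈ span e : e ∣ d, since d * e = d
      refine ⟨(d : ZMod n), ?_⟩
      have hn : ((n : ℤ) : ZMod n) = 0 := by
        rw [ZMod.intCast_zmod_eq_zero_iff_dvd]
      have : ((d : ℤ) : ZMod n) * ((u * d : ℤ) : ZMod n)
          = ((d : ℤ) : ZMod n) - ((v : ℤ) : ZMod n) * ((n : ℤ) : ZMod n) := by
        rw [← Int.cast_mul, ← Int.cast_mul, ← Int.cast_sub]
        congr 1
        have : (d : ℤ) * (u * d) = d * (u * d + v * m) - v * (d * m) := by ring
        rw [this, huv]
        push_cast [← h]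
        ring
      rw [hn, mul_zero, sub_zero] at this
      push_cast at this ⊢
      rw [mul_comm] at this
      exact this.symm
    · -- e ∈ span d : d ∣ e
      refine ⟨(u : ZMod n), ?_⟩
      push_cast
      ring
  
/-- The span of `a` in `ZMod n` equals the span of `gcd a.val n`. -/
lemma span_eq_span_gcd {n : ℕ} [NeZero n] (a : ZMod n) :
    Ideal.span {a} = Ideal.span {(Nat.gcd a.val n : ZMod n)} := by
  apply le_antisymm <;> rw [Ideal.span_singleton_le_span_singleton]
  · -- gcd ∣ a
    obtain ⟨t, ht⟩ := Nat.gcd_dvd_left a.val n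
    refine ⟨(t : ℕ), ?_⟩
    have : ((a.val : ℕ) : ZMod n) = ((Nat.gcd a.val n * t : ℕ) : ZMod n) := by
      rw [← ht]
    rw [ZMod.natCast_zmod_val] at this
    push_cast at this
    exact this
  · -- a ∣ gcd, via Bezout
    have hb := Nat.gcd_eq_gcd_ab a.val n
    refine ⟨((Nat.gcdA a.val n : ℤ) : ZMod n), ?_⟩
    have hn : ((n : ℤ) : ZMod n) = 0 := by
      rw [ZMod.intCast_zmod_eq_zero_iff_dvd]
    have : ((Nat.gcd a.val n : ℤ) : ZMod n)
        = ((a.val : ℤ) : ZMod n) * ((Nat.gcdA a.val n : ℤ) : ZMod n)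
          + ((n : ℤ) : ZMod n) * ((Nat.gcdB a.val n : ℤ) : ZMod n) := by
      rw [← Int.cast_mul, ← Int.cast_mul, ← Int.cast_add, ← hb]
    rw [hn, zero_mul, add_zero] at this
    push_cast at this ⊢
    rw [ZMod.natCast_zmod_val] at this
    exact this

theorem stmt_12 (n : ℕ) (hn : 2 ≤ n) :
    IsWVNR (ZMod n) ↔ IsPrimePow n ∨ Squarefree n := by
  haveI : NeZero n := ⟨by omega⟩
  constructor
  · -- forward direction
    intro hW
    by_contra hcon
    push_neg at hcon
    obtain ⟨hnp, hns⟩ := hcon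
    rw [Nat.squarefree_iff_prime_squarefree] at hns
    push_neg at hns
    obtain ⟨p, hp, hpsq⟩ := hns
    have hn0 : n ≠ 0 := by omega
    set a := n.factorization p with ha
    set m := n / p ^ a with hm
    have hpm : p ^ a * m = n := Nat.ordProj_mul_ordCompl_eq_self n p
    have hcopm : Nat.Coprime p m := Nat.coprime_ordCompl hp hn0
    have ha2 : 2 ≤ a := by
      have := (Nat.Prime.pow_dvd_iff_le_factorization hp hn0).mp
        (by rw [pow_two]; exact hpsq)
      exact this
    have hm1 : m ≠ 1 := by
      intro h
      apply hnp
      exact ⟨p, a, Nat.prime_iff.mp hp, by omega, by rw [← hpm, h, mul_one]⟩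
    have hm0 : m ≠ 0 := by
      intro h
      rw [h, mul_zero] at hpm
      omega
    have hmdvd : m ∣ n := ⟨p ^ a, by rw [← hpm]; ring⟩
    -- the ideals
    set J : Ideal (ZMod n) := Ideal.span {(m : ZMod n)} with hJ
    set I : Ideal (ZMod n) := Ideal.span {((p * m : ℕ) : ZMod n)} with hI
    have hIJ : I ≤ J := by
      rw [hI, hJ, Ideal.span_singleton_le_span_singleton]
      exact ⟨(p : ZMod n), by push_cast; ring⟩
    have hJtop : J ≠ ⊤ := by
      intro hT
      rw [hJ, Ideal.span_singleton_eq_top, ZMod.isUnit_iff_coprime] at hT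
      have hge : Nat.gcd m n = m := Nat.gcd_eq_left hmdvd
      rw [Nat.Coprime] at hT
      omega
    have hJe : ∃ e : ZMod n, IsIdempotentElem e ∧ J = Ideal.span {e} := by
      obtain ⟨e, he, hsp⟩ := span_div_idem (show m * p ^ a = n by rw [← hpm]; ring)
        (Nat.Coprime.pow_right a hcopm.symm)
      exact ⟨e, he, by rw [hJ, hsp]⟩
    obtain ⟨f, hf, hIf⟩ := hW I J (Submodule.fg_span_singleton _)
      (Submodule.fg_span_singleton _) hIJ hJtop hJe
    -- now derive the contradiction in ZMod (p^2)
    have hp2 : p ^ 2 ∣ n := by rw [pow_two]; exact hpsq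
    haveI : NeZero (p ^ 2) := ⟨pow_ne_zero _ hp.pos.ne'⟩
    set φ : ZMod n →+* ZMod (p ^ 2) := ZMod.castHom hp2 (ZMod (p ^ 2)) with hφ
    have hf' : IsIdempotentElem (φ f) := by
      unfold IsIdempotentElem at hf ⊢
      rw [← map_mul, hf]
    have hfd : ((p * m : ℕ) : ZMod n) ∣ f := by
      rw [← Ideal.mem_span_singleton, ← hI, hIf]
      exact Ideal.mem_span_singleton_self f
    have hdf : f ∣ ((p * m : ℕ) : ZMod n) := by
      rw [← Ideal.mem_span_singleton, ← hIf]
      exact Ideal.mem_span_singleton_self _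
    rcases idem_zmod_ppow hp (φ f) hf' with h0 | h1
    · -- φ f = 0 forces p² ∣ p m
      obtain ⟨s, hs⟩ := hdf
      have : ((p * m : ℕ) : ZMod (p ^ 2)) = 0 := by
        have := congrArg φ hs
        rw [map_mul, h0, zero_mul, map_natCast] at this
        exact this
      rw [ZMod.natCast_eq_zero_iff, pow_two] at this
      have hpdm : p ∣ m := (mul_dvd_mul_iff_left (show p ≠ 0 from hp.pos.ne')).mp this
      have hg1 : p ∣ Nat.gcd p m := Nat.dvd_gcd dvd_rfl hpdm
      rw [Nat.Coprime] at hcopm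
      rw [hcopm] at hg1
      have := hp.one_lt
      have := Nat.le_of_dvd one_pos hg1
      omega
    · -- φ f = 1 forces p to be a unit mod p²
      obtain ⟨t, ht⟩ := hfd
      have : (1 : ZMod (p ^ 2)) = ((p * m : ℕ) : ZMod (p ^ 2)) * φ t := by
        have := congrArg φ ht
        rw [map_mul, h1, map_natCast] at this
        exact this
      have hu : IsUnit ((p : ℕ) : ZMod (p ^ 2)) := by
        apply IsUnit.of_mul_eq_one ((m : ZMod (p ^ 2)) * φ t)
        rw [← mul_assoc]
        push_cast at this ⊢
        exact this.symm
      rw [ZMod.isUnit_iff_coprime] at hu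
      have : Nat.gcd p (p ^ 2) = p := Nat.gcd_eq_left (dvd_pow_self p (by omega))
      rw [Nat.Coprime] at hu
      have := hp.one_lt
      omega
  · -- backward direction
    rintro (hpp | hsf)
    · -- prime power case
      obtain ⟨p, k, hp, hk, rfl⟩ := hpp
      have hp' : p.Prime := Nat.prime_iff.mpr hp
      intro I J _ _ hIJ hJtop hJe
      obtain ⟨e, he, hJ⟩ := hJe
      rcases idem_zmod_ppow hp' e he with h0 | h1
      · subst h0
        have hJb : J = ⊥ := by rw [hJ]; simp
        have : I = ⊥ := le_bot_iff.mp (hJb ▸ hIJ)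
        exact ⟨0, IsIdempotentElem.zero, by
          rw [this]; exact (Ideal.span_singleton_eq_bot.mpr rfl).symm⟩
      · exfalso
        apply hJtop
        rw [hJ, h1, Ideal.span_singleton_one]
    · -- squarefree case
      intro I J _ _ _ _ _
      haveI : IsPrincipalIdealRing (ZMod n) :=
        IsPrincipalIdealRing.of_surjective (Int.castRingHom (ZMod n))
          ZMod.intCast_surjective
      obtain ⟨a, ha⟩ := (IsPrincipalIdealRing.principal I).principal
      set g := Nat.gcd a.val n with hg
      have hgd : g ∣ n := Nat.gcd_dvd_right _ _
      have hco : Nat.Coprime g (n / g) := by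
        set c := Nat.gcd g (n / g) with hc
        have hcc : c * c ∣ n := by
          have h1 : c ∣ g := Nat.gcd_dvd_left _ _
          have h2 : c ∣ n / g := Nat.gcd_dvd_right _ _
          have := mul_dvd_mul h1 h2
          rwa [Nat.mul_div_cancel' hgd] at this
        have := hsf c (by rwa [← pow_two, sq] at hcc)
        exact Nat.isUnit_iff.mp this
      obtain ⟨e, he, hsp⟩ := span_div_idem (Nat.mul_div_cancel' hgd) hco
      refine ⟨e, he, ?_⟩
      rw [ha]
      show Ideal.span {a} = _
      rw [span_eq_span_gcd a, ← hg, hsp]
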